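/- arXiv:2512.01154 — 3 statements merged into one kernel-verified Lean document; each statement's English description precedes it below -/
import Mathlib

section
/- Let θ : [0,1] → [0,+∞] satisfy: θ is continuous, θ is non-increasing, θ(x) = +∞ if and only if x = 0, and θ(x) > θ(1) for each x ∈ [0,1). Let ϑ : [0,+∞] → [−∞,+∞] satisfy: (a) ϑ is continuous and non-increasing on [2θ(1),+∞]; (b) for x ∈ [2θ(1),+∞], ϑ(x) = 0 if and only if x = +∞; (c) for x ∈ [2θ(1),+∞], ϑ(x) = 1 if and only if x = 2θ(1). Then the bivariate function O_{θ,ϑ} : [0,1]² → [0,1] given by O_{θ,ϑ}(x,y) = ϑ(θ(x)+θ(y)) is an overlap function. -/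
open Set Filter Topology
open scoped ENNReal

noncomputable section

/-- `O`, viewed as a function on `[0,1]²` with values in `[0,1] ⊆ [-∞,+∞]`,
is an overlap function: bounded in `[0,1]`, commutative, `O(x,y)=0 ↔ xy=0`,
`O(x,y)=1 ↔ xy=1`, non-decreasing in each variable, and continuous. -/
def IsOverlapFn (O : ℝ → ℝ → EReal) : Prop :=
  (∀ x ∈ Icc (0:ℝ) 1, ∀ y ∈ Icc (0:ℝ) 1, O x y ∈ Icc (0:EReal) 1) ∧
  (∀ x ∈ Icc (0:ℝ) 1, ∀ y ∈ Icc (0:ℝ) 1, O x y = O y x) ∧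
  (∀ x ∈ Icc (0:ℝ) 1, ∀ y ∈ Icc (0:ℝ) 1, (O x y = 0 ↔ x * y = 0)) ∧
  (∀ x ∈ Icc (0:ℝ) 1, ∀ y ∈ Icc (0:ℝ) 1, (O x y = 1 ↔ x * y = 1)) ∧
  (∀ y ∈ Icc (0:ℝ) 1, ∀ x₁ ∈ Icc (0:ℝ) 1, ∀ x₂ ∈ Icc (0:ℝ) 1, x₁ ≤ x₂ → O x₁ y ≤ O x₂ y) ∧
  (∀ x ∈ Icc (0:ℝ) 1, ∀ y₁ ∈ Icc (0:ℝ) 1, ∀ y₂ ∈ Icc (0:ℝ) 1, y₁ ≤ y₂ → O x y₁ ≤ O x y₂) ∧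
  ContinuousOn (fun p : ℝ × ℝ => O p.1 p.2) (Icc (0:ℝ) 1 ×ˢ Icc (0:ℝ) 1)

/-- Both one-sided limits `θ(x⁻)` and `θ(x⁺)` (taken within the domain `[0,1]`)
exist for every `x ∈ [0,1]`. -/
def HasOneSidedLimits (θ : ℝ → ℝ≥0∞) : Prop :=
  ∀ x ∈ Icc (0:ℝ) 1,
    (∃ l : ℝ≥0∞, Tendsto θ (𝓝[Icc (0:ℝ) 1 ∩ Iio x] x) (𝓝 l)) ∧
    (∃ l : ℝ≥0∞, Tendsto θ (𝓝[Icc (0:ℝ) 1 ∩ Ioi x] x) (𝓝 l))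

/-- If `θ` is continuous, non-increasing, `θ(x)=+∞ ↔ x=0`, `θ(x) > θ(1)` on `[0,1)`,
and `ϑ` is continuous and non-increasing on `[2θ(1),+∞]` with `ϑ(x)=0 ↔ x=+∞` and
`ϑ(x)=1 ↔ x=2θ(1)` there, then `O_{θ,ϑ}(x,y)=ϑ(θ(x)+θ(y))` is an overlap function. -/
theorem stmt_6 (θ : ℝ → ℝ≥0∞) (ϑ : ℝ≥0∞ → EReal)
    (hθc : ContinuousOn θ (Icc (0:ℝ) 1))
    (hθa : AntitoneOn θ (Icc (0:ℝ) 1))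
    (hθtop : ∀ x ∈ Icc (0:ℝ) 1, (θ x = ⊤ ↔ x = 0))
    (hθ1 : ∀ x ∈ Ico (0:ℝ) 1, θ 1 < θ x)
    (hϑc : ContinuousOn ϑ (Ici (2 * θ 1)))
    (hϑa : AntitoneOn ϑ (Ici (2 * θ 1)))
    (hϑ0 : ∀ x ∈ Ici (2 * θ 1), (ϑ x = 0 ↔ x = ⊤))
    (hϑ1 : ∀ x ∈ Ici (2 * θ 1), (ϑ x = 1 ↔ x = 2 * θ 1)) :
    IsOverlapFn (fun x y => ϑ (θ x + θ y)) := by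
  have h1 : (1:ℝ) ∈ Icc (0:ℝ) 1 := by norm_num
  have hθ1top : θ 1 ≠ ⊤ := by
    intro h
    have := (hθtop 1 h1).mp h
    norm_num at this
  have hsum : ∀ x ∈ Icc (0:ℝ) 1, ∀ y ∈ Icc (0:ℝ) 1, 2 * θ 1 ≤ θ x + θ y := by
    intro x hx y hy
    rw [two_mul]
    exact add_le_add (hθa hx h1 hx.2) (hθa hy h1 hy.2)
  have hmemtop : (⊤:ℝ≥0∞) ∈ Ici (2 * θ 1) := mem_Ici.mpr le_top
  have hmem0 : 2 * θ 1 ∈ Ici (2 * θ 1) := mem_Ici.mpr le_rfl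
  have hϑtop : ϑ ⊤ = 0 := (hϑ0 ⊤ hmemtop).mpr rfl
  have hϑbase : ϑ (2 * θ 1) = 1 := (hϑ1 _ hmem0).mpr rfl
  have hθeq1 : ∀ x ∈ Icc (0:ℝ) 1, θ x = θ 1 → x = 1 := by
    intro x hx h
    by_contra hne
    exact absurd h (ne_of_gt (hθ1 x ⟨hx.1, lt_of_le_of_ne hx.2 hne⟩))
  refine ⟨?_, ?_, ?_, ?_, ?_, ?_, ?_⟩
  · intro x hx y hy
    exact ⟨hϑtop ▸ hϑa (hsum x hx y hy) hmemtop le_top,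
      hϑbase ▸ hϑa hmem0 (hsum x hx y hy) (hsum x hx y hy)⟩
  · intro x hx y hy
    simp [add_comm]
  · intro x hx y hy
    rw [hϑ0 _ (hsum x hx y hy), ENNReal.add_eq_top, mul_eq_zero]
    constructor
    · rintro (h | h)
      · exact Or.inl ((hθtop x hx).mp h)
      · exact Or.inr ((hθtop y hy).mp h)
    · rintro (h | h)
      · exact Or.inl ((hθtop x hx).mpr h)
      · exact Or.inr ((hθtop y hy).mpr h)
  · intro x hx y hy
    rw [hϑ1 _ (hsum x hx y hy)]
    constructor
    · intro h
      have hax : θ 1 ≤ θ x := hθa hx h1 hx.2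
      have hay : θ 1 ≤ θ y := hθa hy h1 hy.2
      have hx1 : θ x = θ 1 := by
        by_contra hne
        have hlt : θ 1 < θ x := lt_of_le_of_ne hax (Ne.symm hne)
        have : 2 * θ 1 < θ x + θ y := by
          rw [two_mul]
          exact lt_of_lt_of_le (ENNReal.add_lt_add_right hθ1top hlt) (add_le_add_right hay _)
        exact absurd h (ne_of_gt this)
      have hy1 : θ y = θ 1 := by
        by_contra hne
        have hlt : θ 1 < θ y := lt_of_le_of_ne hay (Ne.symm hne)
        have : 2 * θ 1 < θ x + θ y := by
          rw [two_mul]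
          exact lt_of_lt_of_le (ENNReal.add_lt_add_left hθ1top hlt) (add_le_add_left hax _)
        exact absurd h (ne_of_gt this)
      rw [hθeq1 x hx hx1, hθeq1 y hy hy1, mul_one]
    · intro h
      have hx1 : x = 1 := by nlinarith [hx.1, hx.2, hy.1, hy.2]
      have hy1 : y = 1 := by nlinarith [hx.1, hx.2, hy.1, hy.2]
      rw [hx1, hy1, two_mul]
  · intro y hy x₁ hx₁ x₂ hx₂ hle
    exact hϑa (hsum x₂ hx₂ y hy) (hsum x₁ hx₁ y hy)
      (add_le_add_left (hθa hx₁ hx₂ hle) _)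
  · intro x hx y₁ hy₁ y₂ hy₂ hle
    exact hϑa (hsum x hx y₂ hy₂) (hsum x hx y₁ hy₁)
      (add_le_add_right (hθa hy₁ hy₂ hle) _)
  · have hcθ : ContinuousOn (fun p : ℝ × ℝ => θ p.1 + θ p.2)
        (Icc (0:ℝ) 1 ×ˢ Icc (0:ℝ) 1) := by
      exact (hθc.comp continuousOn_fst fun p hp => hp.1).add
        (hθc.comp continuousOn_snd fun p hp => hp.2)
    exact hϑc.comp hcθ fun p hp => hsum p.1 hp.1 p.2 hp.2
end
end

section
/- Let θ : [0,1] → [0,+∞] be a function such that the one-sided limits θ(x⁻) and θ(x⁺) exist for every x ∈ [0,1], and let ϑ : [0,+∞] → [−∞,+∞] be a function such that (θ,ϑ) is an additive generator pair of the overlap function O_{θ,ϑ}(x,y) = ϑ(θ(x)+θ(y)). Let k,b ∈ ℝ with k ≠ 0, let h be the extended-real affine function h(x) = kx + b, and let g be defined by g(x) = (x − 2b)/k. Then (h∘θ, ϑ∘g) is also an additive generator pair of O_{θ,ϑ}, i.e., ϑ(g(h(θ(x)) + h(θ(y)))) = ϑ(θ(x)+θ(y)) for all x,y ∈ [0,1].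 -/
open Set Filter Topology
open scoped ENNReal

noncomputable section

lemma key (k b : ℝ) (hk : k ≠ 0) (u v : ℝ≥0∞) :
    ((k : EReal) * u + b + ((k : EReal) * v + b) - ((2*b : ℝ) : EReal)) / (k : EReal)
      = ((u + v : ℝ≥0∞) : EReal) := by
  have botsub : ((⊥:EReal) - ((2*b:ℝ):EReal)) = ⊥ := by
    rw [sub_eq_add_neg, ← EReal.coe_neg, EReal.bot_add]
  have topsub : ((⊤:EReal) - ((2*b:ℝ):EReal)) = ⊤ := by
    rw [sub_eq_add_neg, ← EReal.coe_neg, EReal.top_add_coe]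
  have hco : ∀ p : NNReal, (((p:ℝ≥0∞)):EReal) = ((p:ℝ):EReal) := by intro p; norm_cast
  have haff : ∀ p : NNReal, (k : EReal) * (((p:ℝ≥0∞)):EReal) + b = (((k*p+b : ℝ)) : EReal) := by
    intro p; rw [hco]; norm_cast
  rcases hk.lt_or_gt with hneg | hpos
  · have hkE : (k : EReal) < 0 := by exact_mod_cast hneg
    have hbd := EReal.bot_div_of_neg_ne_bot hkE (EReal.coe_ne_bot k)
    induction u using ENNReal.recTopCoe with
    | top =>
      rw [EReal.coe_ennreal_top, EReal.coe_mul_top_of_neg hneg, EReal.bot_add, EReal.bot_add,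
        botsub, hbd, top_add, EReal.coe_ennreal_top]
    | coe p =>
      induction v using ENNReal.recTopCoe with
      | top =>
        rw [haff, EReal.coe_ennreal_top, EReal.coe_mul_top_of_neg hneg, EReal.bot_add,
          EReal.add_bot, botsub, hbd, add_top, EReal.coe_ennreal_top]
      | coe q =>
        rw [haff, haff,
          show (((k*p+b : ℝ)) : EReal) + (((k*q+b : ℝ)) : EReal) - ((2*b:ℝ):EReal)
            = (((k*p+b+(k*q+b)-2*b : ℝ)):EReal) by norm_cast,
          ← EReal.coe_div, show ((p:ℝ≥0∞) + (q:ℝ≥0∞)) = (((p+q : NNReal)):ℝ≥0∞) by norm_cast,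
          hco]
        norm_cast
        field_simp
        push_cast
        ring
  · have hkE : (0:EReal) < (k : EReal) := by exact_mod_cast hpos
    have htd := EReal.top_div_of_pos_ne_top hkE (EReal.coe_ne_top k)
    induction u using ENNReal.recTopCoe with
    | top =>
      induction v using ENNReal.recTopCoe with
      | top =>
        rw [EReal.coe_ennreal_top, EReal.coe_mul_top_of_pos hpos, EReal.top_add_coe,
          EReal.top_add_top, topsub, htd, top_add, EReal.coe_ennreal_top]
      | coe q =>
        rw [haff, EReal.coe_ennreal_top, EReal.coe_mul_top_of_pos hpos, EReal.top_add_coe,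
          EReal.top_add_coe, topsub, htd, top_add, EReal.coe_ennreal_top]
    | coe p =>
      induction v using ENNReal.recTopCoe with
      | top =>
        rw [haff, EReal.coe_ennreal_top, EReal.coe_mul_top_of_pos hpos, EReal.top_add_coe,
          EReal.coe_add_top, topsub, htd, add_top, EReal.coe_ennreal_top]
      | coe q =>
        rw [haff, haff,
          show (((k*p+b : ℝ)) : EReal) + (((k*q+b : ℝ)) : EReal) - ((2*b:ℝ):EReal)
            = (((k*p+b+(k*q+b)-2*b : ℝ)):EReal) by norm_cast,
          ← EReal.coe_div, show ((p:ℝ≥0∞) + (q:ℝ≥0∞)) = (((p+q : NNReal)):ℝ≥0∞) by norm_cast,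
          hco]
        norm_cast
        field_simp
        push_cast
        ring

/-- If `(θ,ϑ)` is an additive generator pair of the overlap function
`O_{θ,ϑ}(x,y)=ϑ(θ(x)+θ(y))`, `h(x)=kx+b` (`k ≠ 0`, extended-real affine) and
`g(x)=(x-2b)/k` on `Ran(h∘θ)+Ran(h∘θ)`, then `(h∘θ, ϑ∘g)` is also an additive
generator pair of `O_{θ,ϑ}`. -/
theorem stmt_7 (θ : ℝ → ℝ≥0∞) (ϑ : ℝ≥0∞ → EReal)
    (hθ : HasOneSidedLimits θ)
    (hO : IsOverlapFn (fun x y => ϑ (θ x + θ y)))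
    (k b : ℝ) (hk : k ≠ 0)
    (h : ℝ≥0∞ → EReal) (hh : ∀ u : ℝ≥0∞, h u = (k : EReal) * (u : EReal) + (b : EReal))
    (g : EReal → ℝ≥0∞)
    (hg : ∀ z ∈ image2 (· + ·) ((fun x => h (θ x)) '' Icc (0:ℝ) 1)
            ((fun x => h (θ x)) '' Icc (0:ℝ) 1),
          (g z : EReal) = (z - ((2 * b : ℝ) : EReal)) / (k : EReal)) :
    ∀ x ∈ Icc (0:ℝ) 1, ∀ y ∈ Icc (0:ℝ) 1,
      ϑ (g (h (θ x) + h (θ y))) = ϑ (θ x + θ y) := by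
  intro x hx y hy
  have hz : h (θ x) + h (θ y) ∈ image2 (· + ·) ((fun x => h (θ x)) '' Icc (0:ℝ) 1)
      ((fun x => h (θ x)) '' Icc (0:ℝ) 1) :=
    mem_image2_of_mem (mem_image_of_mem _ hx) (mem_image_of_mem _ hy)
  have := hg _ hz
  rw [hh, hh] at this
  rw [key k b hk (θ x) (θ y)] at this
  rw [hh, hh, EReal.coe_ennreal_injective this]
end
end

section
/- Let h : [0,+∞] → [−∞,+∞] be continuous and non-decreasing, with h(u) = +∞ if and only if u = +∞ (so h(0) ∈ ℝ), and suppose h is injective on [0,+∞). Let g : [2h(0),+∞] → [0,+∞] be a function satisfying u + v = g(h(u) + h(v)) for all u,v ∈ [0,+∞]. Then there exist constants k > 0 and b ∈ ℝ such that h(x) = kx + b for all x ∈ [0,+∞] (with k·(+∞)+b = +∞), and consequently g(x) = (x − 2b)/k for all x ∈ [2h(0),+∞]. -/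
open Set Filter Topology
open scoped ENNReal

noncomputable section

/-- Functional-equation step: if `h : [0,+∞] → [-∞,+∞]` is continuous,
non-decreasing, `h(u) = +∞ ↔ u = +∞`, injective on `[0,+∞)`, and
`g : [2h(0),+∞] → [0,+∞]` satisfies `u + v = g(h(u) + h(v))` for all
`u,v ∈ [0,+∞]`, then `h(x) = kx + b` for some `k > 0`, `b ∈ ℝ`, and consequently
`g(x) = (x - 2b)/k` on `[2h(0),+∞]`. -/
theorem stmt_17 (h : ℝ≥0∞ → EReal) (g : EReal → ℝ≥0∞)
    (hcont : Continuous h) (hmono : Monotone h)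
    (htop : ∀ u : ℝ≥0∞, (h u = ⊤ ↔ u = ⊤))
    (hinj : InjOn h (Iio (⊤ : ℝ≥0∞)))
    (hg : ∀ u v : ℝ≥0∞, u + v = g (h u + h v)) :
    ∃ k b : ℝ, 0 < k ∧
      (∀ x : ℝ≥0∞, h x = (k : EReal) * (x : EReal) + (b : EReal)) ∧
      (∀ x ∈ Ici (2 * h 0), (g x : EReal) = (x - ((2 * b : ℝ) : EReal)) / (k : EReal)) := by
  -- h 0 is not ⊥
  have hb_ne_bot : h 0 ≠ ⊥ := by
    intro hb
    have h0 : (0 : ℝ≥0∞) = g ⊥ := by have := hg 0 0; simpa [hb] using this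
    have h1 : (1 : ℝ≥0∞) = g ⊥ := by
      have := hg 1 0; simpa [hb, EReal.add_bot] using this
    exact one_ne_zero (h1.trans h0.symm)
  have hne_bot : ∀ x : ℝ≥0∞, h x ≠ ⊥ := fun x hx =>
    hb_ne_bot (le_bot_iff.1 (hx ▸ hmono (zero_le : (0:ℝ≥0∞) ≤ x)))
  have hfin : ∀ x : ℝ≥0∞, x ≠ ⊤ → h x ≠ ⊤ := fun x hx ht => hx ((htop x).1 ht)
  -- key midpoint lemma via IVT
  have key : ∀ x y : ℝ≥0∞, x ≠ ⊤ → y ≠ ⊤ → x ≤ y →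
      ∃ z ∈ Icc x y, h x + h y = h z + h z ∧ x + y = z + z := by
    intro x y hx hy hxy
    set a := (h x).toReal with ha
    set c := (h y).toReal with hc
    have hax : ((a : ℝ) : EReal) = h x := EReal.coe_toReal (hfin x hx) (hne_bot x)
    have hcy : ((c : ℝ) : EReal) = h y := EReal.coe_toReal (hfin y hy) (hne_bot y)
    have hac : a ≤ c := by
      have := hmono hxy
      rw [← hax, ← hcy] at this
      exact_mod_cast this
    have hm1 : h x ≤ (((a + c) / 2 : ℝ) : EReal) := by
      rw [← hax]; exact_mod_cast by linarith
    have hm2 : (((a + c) / 2 : ℝ) : EReal) ≤ h y := by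
      rw [← hcy]; exact_mod_cast by linarith
    obtain ⟨z, hz, hzval⟩ := intermediate_value_Icc hxy hcont.continuousOn ⟨hm1, hm2⟩
    have hsum : h x + h y = h z + h z := by
      rw [hzval, ← hax, ← hcy, ← EReal.coe_add, ← EReal.coe_add, EReal.coe_eq_coe_iff]
      ring
    refine ⟨z, hz, hsum, ?_⟩
    rw [hg x y, hg z z, hsum]
  -- additivity
  have hadd : ∀ x y : ℝ≥0∞, x ≠ ⊤ → y ≠ ⊤ → h x + h y = h (x + y) + h 0 := by
    have main : ∀ x y : ℝ≥0∞, x ≠ ⊤ → y ≠ ⊤ → x ≤ y → h x + h y = h (x + y) + h 0 := by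
      intro x y hx hy hxy
      have hxyt : x + y ≠ ⊤ := ENNReal.add_ne_top.2 ⟨hx, hy⟩
      obtain ⟨z, hz, e1, e2⟩ := key x y hx hy hxy
      obtain ⟨w, hw, e3, e4⟩ := key 0 (x + y) (by simp) hxyt zero_le
      have hzt : z ≠ ⊤ := ne_top_of_le_ne_top hy hz.2
      have hwt : w ≠ ⊤ := ne_top_of_le_ne_top hxyt hw.2
      have hzw : z = w := by
        have e5 : z + z = w + w := by rw [← e2]; simpa using e4
        have : z.toReal + z.toReal = w.toReal + w.toReal := by
          rw [← ENNReal.toReal_add hzt hzt, ← ENNReal.toReal_add hwt hwt, e5]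
        have : z.toReal = w.toReal := by linarith
        exact (ENNReal.toReal_eq_toReal_iff' hzt hwt).1 this
      rw [e1, hzw, ← e3, add_comm]
    intro x y hx hy
    rcases le_total x y with hxy | hyx
    · exact main x y hx hy hxy
    · rw [add_comm (h x), add_comm x]; exact main y x hy hx hyx
  -- pass to real-valued functions
  set b : ℝ := (h 0).toReal with hbdef
  have hb0 : ((b : ℝ) : EReal) = h 0 := EReal.coe_toReal (hfin 0 (by simp)) hb_ne_bot
  set F : ℝ → ℝ := fun t => (h (ENNReal.ofReal t)).toReal - b with hF
  have hFadd : ∀ s t : ℝ, 0 ≤ s → 0 ≤ t → F (s + t) = F s + F t := by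
    intro s t hs ht
    have hu : ENNReal.ofReal s ≠ ⊤ := ENNReal.ofReal_ne_top
    have hv : ENNReal.ofReal t ≠ ⊤ := ENNReal.ofReal_ne_top
    have := hadd (ENNReal.ofReal s) (ENNReal.ofReal t) hu hv
    rw [← ENNReal.ofReal_add hs ht] at this
    have h2 := congrArg EReal.toReal this
    rw [EReal.toReal_add (hfin _ hu) (hne_bot _) (hfin _ hv) (hne_bot _),
      EReal.toReal_add (hfin _ ENNReal.ofReal_ne_top) (hne_bot _) (hfin 0 (by simp)) hb_ne_bot] at h2
    simp only [hF]
    rw [← hbdef] at h2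
    linarith
  have hFnonneg : ∀ t : ℝ, 0 ≤ t → 0 ≤ F t := by
    intro t ht
    have : h 0 ≤ h (ENNReal.ofReal t) := hmono zero_le
    have := EReal.toReal_le_toReal this hb_ne_bot (hfin _ ENNReal.ofReal_ne_top)
    simp only [hF]
    rw [← hbdef] at this
    linarith
  have hF0 : F 0 = 0 := by simp [hF, hbdef]
  -- extend to an additive function on ℝ
  set Φ : ℝ → ℝ := fun t => F (max t 0) - F (max (-t) 0) with hΦ
  have hΦF : ∀ t : ℝ, 0 ≤ t → Φ t = F t := by
    intro t ht
    simp only [hΦ]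
    rw [max_eq_left ht, max_eq_right (by linarith : -t ≤ 0), hF0, sub_zero]
  have hposdiff : ∀ a : ℝ, max a 0 - max (-a) 0 = a := by
    intro a
    rcases le_total a 0 with h' | h'
    · rw [max_eq_right h', max_eq_left (by linarith : 0 ≤ -a)]; ring
    · rw [max_eq_left h', max_eq_right (by linarith : -a ≤ 0)]; ring
  have hΦadd : ∀ s t : ℝ, Φ (s + t) = Φ s + Φ t := by
    intro s t
    have harg : max (s + t) 0 + max (-s) 0 + max (-t) 0
        = max (-(s + t)) 0 + max s 0 + max t 0 := by
      have h1 := hposdiff (s + t); have h2 := hposdiff s; have h3 := hposdiff t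
      linarith
    have e1 : F (max (s + t) 0 + max (-s) 0 + max (-t) 0)
        = F (max (s + t) 0) + F (max (-s) 0) + F (max (-t) 0) := by
      rw [hFadd _ _ (by positivity) (le_max_right _ _),
        hFadd _ _ (le_max_right _ _) (le_max_right _ _)]
    have e2 : F (max (-(s + t)) 0 + max s 0 + max t 0)
        = F (max (-(s + t)) 0) + F (max s 0) + F (max t 0) := by
      rw [hFadd _ _ (by positivity) (le_max_right _ _),
        hFadd _ _ (le_max_right _ _) (le_max_right _ _)]
    have := harg ▸ e1
    rw [e2] at this
    simp only [hΦ]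
    linarith
  have hΦmono : Monotone Φ := by
    intro s t hst
    have h1 : Φ t = Φ s + Φ (t - s) := by
      have := hΦadd s (t - s)
      rwa [show s + (t - s) = t by ring] at this
    have h2 : Φ (t - s) = F (t - s) := hΦF (t - s) (by linarith)
    have h3 := hFnonneg (t - s) (by linarith)
    linarith
  set Φhom : ℝ →+ ℝ := AddMonoidHom.mk' Φ hΦadd with hΦhom
  have hΦrat : ∀ (q : ℚ) (x : ℝ), Φ ((q : ℝ) * x) = (q : ℝ) * Φ x := by
    intro q x
    have := map_ratCast_smul Φhom ℝ ℝ q x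
    simpa [hΦhom, smul_eq_mul] using this
  set k : ℝ := Φ 1 with hk
  have hknonneg : 0 ≤ k := by
    rw [hk, hΦF 1 zero_le_one]; exact hFnonneg 1 zero_le_one
  have hkpos : 0 < k := by
    rcases hknonneg.lt_or_eq with h' | h'
    · exact h'
    · exfalso
      have h01 : h 0 = h 1 := by
        have hle : h 0 ≤ h 1 := hmono zero_le
        have : F 1 = 0 := by rw [← hΦF 1 zero_le_one, ← hk, ← h']
        have htr : (h 1).toReal = b := by
          simp only [hF] at this
          have : (h (ENNReal.ofReal 1)).toReal = b := by linarith
          simpa using this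
        rw [← EReal.coe_toReal (hfin 1 (by simp)) (hne_bot 1), htr, hb0]
      exact zero_ne_one (hinj (by simp : (0:ℝ≥0∞) ∈ Iio ⊤) (by simp : (1:ℝ≥0∞) ∈ Iio ⊤) h01)
  -- Φ is linear
  have hΦlin : ∀ x : ℝ, Φ x = k * x := by
    intro x
    have hq : ∀ q : ℚ, Φ (q : ℝ) = k * q := by
      intro q
      have := hΦrat q 1
      rw [mul_one] at this
      rw [this, ← hk]; ring
    refine le_antisymm ?_ ?_
    · by_contra h'
      push_neg at h'
      have hx : x < Φ x / k := (lt_div_iff₀ hkpos).2 (by linarith [mul_comm k x])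
      obtain ⟨q, hq1, hq2⟩ := exists_rat_btwn hx
      have h1 : Φ x ≤ Φ q := hΦmono hq1.le
      have h2 : Φ (q : ℝ) = k * q := hq q
      have h3 : (q : ℝ) * k < Φ x := (lt_div_iff₀ hkpos).1 hq2
      linarith [mul_comm k (q : ℝ)]
    · by_contra h'
      push_neg at h'
      have hx : Φ x / k < x := (div_lt_iff₀ hkpos).2 (by linarith [mul_comm k x])
      obtain ⟨q, hq1, hq2⟩ := exists_rat_btwn hx
      have h1 : Φ q ≤ Φ x := hΦmono hq2.le
      have h2 : Φ (q : ℝ) = k * q := hq q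
      have h3 : Φ x < (q : ℝ) * k := (div_lt_iff₀ hkpos).1 hq1
      linarith [mul_comm k (q : ℝ)]
  -- the formula for h on finite values
  have hofReal : ∀ t : ℝ, 0 ≤ t → h (ENNReal.ofReal t) = ((k * t + b : ℝ) : EReal) := by
    intro t ht
    have : F t = k * t := by rw [← hΦF t ht, hΦlin]
    have htr : (h (ENNReal.ofReal t)).toReal = k * t + b := by
      simp only [hF] at this; linarith
    rw [← EReal.coe_toReal (hfin _ ENNReal.ofReal_ne_top) (hne_bot _), htr]
  have hform : ∀ x : ℝ≥0∞, h x = (k : EReal) * (x : EReal) + (b : EReal) := by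
    intro x
    rcases eq_or_ne x ⊤ with rfl | hx
    · rw [(htop ⊤).2 rfl, EReal.coe_ennreal_top, EReal.coe_mul_top_of_pos hkpos,
        EReal.top_add_of_ne_bot (EReal.coe_ne_bot b)]
    · have ht : 0 ≤ x.toReal := ENNReal.toReal_nonneg
      have hxe : (x : EReal) = ((x.toReal : ℝ) : EReal) := by
        rw [← EReal.coe_toReal (x := (x : EReal)) (by simpa using hx)
          (EReal.coe_ennreal_ne_bot x), EReal.toReal_coe_ennreal]
      have := hofReal x.toReal ht
      rw [ENNReal.ofReal_toReal hx] at this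
      rw [this, hxe, ← EReal.coe_mul, ← EReal.coe_add]
  refine ⟨k, b, hkpos, hform, ?_⟩
  -- the formula for g
  have h2h0 : 2 * h 0 = ((2 * b : ℝ) : EReal) := by
    rw [← hb0]; norm_cast
  intro x hx
  rw [h2h0] at hx
  rcases eq_or_ne x ⊤ with rfl | hxt
  · have hgtop : g ⊤ = ⊤ := by
      have := hg ⊤ 0
      rw [(htop ⊤).2 rfl, EReal.top_add_of_ne_bot hb_ne_bot] at this
      simpa using this.symm
    rw [hgtop, EReal.coe_ennreal_top, EReal.top_sub_coe,
      EReal.top_div_of_pos_ne_top (by exact_mod_cast hkpos) (EReal.coe_ne_top k)]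
  · have hxb : x ≠ ⊥ := fun hb' => by
      rw [hb'] at hx
      exact (EReal.bot_lt_coe (2 * b)).not_ge hx
    set r : ℝ := x.toReal with hr
    have hxr : x = ((r : ℝ) : EReal) := (EReal.coe_toReal hxt hxb).symm
    have hrb : 2 * b ≤ r := by
      have hx' : ((2 * b : ℝ) : EReal) ≤ x := hx
      rw [hxr] at hx'
      exact_mod_cast hx'
    set t : ℝ := (r - 2 * b) / k with htdef
    have htnn : 0 ≤ t := div_nonneg (by linarith) hkpos.le
    have hu : h (ENNReal.ofReal t) = ((r - b : ℝ) : EReal) := by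
      rw [hofReal t htnn]
      congr 1
      rw [htdef, mul_div_assoc', mul_div_cancel_left₀ _ hkpos.ne']
      ring
    have hsum : h (ENNReal.ofReal t) + h 0 = x := by
      rw [hu, ← hb0, ← EReal.coe_add, hxr]
      norm_num
    have hgx : g x = ENNReal.ofReal t := by
      have := hg (ENNReal.ofReal t) 0
      rw [hsum, add_zero] at this
      exact this.symm
    rw [hgx, EReal.coe_ennreal_ofReal, max_eq_left htnn, hxr, ← EReal.coe_sub, ← EReal.coe_div]
end
end
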